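/- Let C be a pointed category with finite sums, D a pointed category with finite sums, E an abelian category, and F: C → D, G: D → E functors with F reduced. Then the natural transformation T_n(F*t_n^G): T_n(G ∘ F) → T_n(T_n G ∘ F) induced by the canonical epimorphism t_n^G: G → T_n G is an isomorphism. -/

import Mathlib

open CategoryTheory CategoryTheory.Limits

universe u v w

variable {C : Type u} [Category.{v} C] [HasZeroMorphisms C] [HasFiniteCoproducts C]

/-- The retraction `r_k : X₁ ∨ ⋯ ∨ X_n → X₁ ∨ ⋯ ∨ X̂_k ∨ ⋯ ∨ X_n` killing the
`k`-th summand. -/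
noncomputable def rhat {ι : Type} [Fintype ι] [DecidableEq ι] (X : ι → C) (k : ι) :
    (∐ X) ⟶ ∐ (fun i : {i : ι // i ≠ k} => X i.1) :=
  Sigma.desc (fun i =>
    if h : i = k then 0 else Sigma.ι (fun i : {i : ι // i ≠ k} => X i.1) ⟨i, h⟩)

/-- The cross-effect `cr F (X₁,…,X_n)` as a subgroup of `F(X₁ ∨ ⋯ ∨ X_n)`. -/
noncomputable def crSub (F : C ⥤ AddCommGrpCat.{w}) {ι : Type} [Fintype ι]
    [DecidableEq ι] (X : ι → C) : AddSubgroup (F.obj (∐ X)) :=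
  ⨅ k : ι, AddMonoidHom.ker (F.map (rhat X k)).hom

/-- A functor to `Ab` is polynomial of degree `≤ n` if its `(n+1)`-st
cross-effect vanishes. -/
noncomputable def PolyLe (n : ℕ) (F : C ⥤ AddCommGrpCat.{w}) : Prop :=
  ∀ X : Fin (n + 1) → C, crSub F X = ⊥

/-- `(T, t)` is the degree-`n` Taylorization of `G`: `T` is polynomial of
degree `≤ n` and `t : G ⟶ T` is universal among natural transformations from
`G` to polynomial functors of degree `≤ n` (the unit of the adjunction of
Proposition `Tn-prop`). -/
noncomputable def IsTaylorization (n : ℕ) (G T : C ⥤ AddCommGrpCat.{w})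
    (t : G ⟶ T) : Prop :=
  PolyLe n T ∧
    ∀ (H : C ⥤ AddCommGrpCat.{w}), PolyLe n H →
      ∀ s : G ⟶ H, ∃! u : T ⟶ H, t ≫ u = s

set_option linter.unusedSectionVars false

----------------------------------------------------------------------
-- auxiliary development
----------------------------------------------------------------------

/-- applying a morphism of `AddCommGrp` to a finite sum -/
lemma hom_map_sum {A B : AddCommGrpCat.{w}} (f : A ⟶ B) {ι : Type} (s : Finset ι) (g : ι → A) :
    f (∑ i ∈ s, g i) = ∑ i ∈ s, f (g i) := by
  let φ : (A : Type w) →+ (B : Type w) := f.hom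
  exact map_sum φ g s

lemma map_comp_apply (G : C ⥤ AddCommGrpCat.{w}) {A B E : C} (h : A ⟶ B) (g : B ⟶ E)
    (c : G.obj A) : G.map (h ≫ g) c = G.map g (G.map h c) := by
  rw [G.map_comp]; rfl

/-- pointwise naturality -/
lemma napp {P Q : C ⥤ AddCommGrpCat.{w}} (s : P ⟶ Q) {a b : C} (f : a ⟶ b) (x : P.obj a) :
    s.app b (P.map f x) = Q.map f (s.app a x) := by
  have h := s.naturality f
  calc s.app b (P.map f x) = (P.map f ≫ s.app b) x := rfl
    _ = (s.app a ≫ Q.map f) x := by rw [h]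
    _ = Q.map f (s.app a x) := rfl

/-- natural transformations map cross-effects to cross-effects -/
lemma crSub_map {P Q : C ⥤ AddCommGrpCat.{w}} (s : P ⟶ Q) {ι : Type} [Fintype ι]
    [DecidableEq ι] (X : ι → C) {c : P.obj (∐ X)} (hc : c ∈ crSub P X) :
    s.app (∐ X) c ∈ crSub Q X := by
  rw [crSub, AddSubgroup.mem_iInf] at hc ⊢
  intro k
  rw [AddMonoidHom.mem_ker]
  have hk := hc k
  rw [AddMonoidHom.mem_ker] at hk
  calc Q.map (rhat X k) (s.app (∐ X) c) = s.app _ (P.map (rhat X k) c) := (napp s _ c).symm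
    _ = s.app _ 0 := by rw [hk]
    _ = 0 := (s.app _).hom.map_zero

/-- generating set for the Taylor kernel -/
def genSet (n : ℕ) (G : C ⥤ AddCommGrpCat.{w}) (Y : C) : Set (G.obj Y) :=
  {y | ∃ (W : Fin (n+1) → C) (f : (∐ W) ⟶ Y) (c : G.obj (∐ W)),
    c ∈ crSub G W ∧ y = G.map f c}

noncomputable def genSub (n : ℕ) (G : C ⥤ AddCommGrpCat.{w}) (Y : C) :
    AddSubgroup (G.obj Y) :=
  AddSubgroup.closure (genSet n G Y)

lemma genSub_map (n : ℕ) (G : C ⥤ AddCommGrpCat.{w}) {Y Z : C} (f : Y ⟶ Z)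
    {x : G.obj Y} (hx : x ∈ genSub n G Y) : G.map f x ∈ genSub n G Z := by
  induction hx using AddSubgroup.closure_induction with
  | mem y hy =>
    obtain ⟨W, g, c, hc, rfl⟩ := hy
    refine AddSubgroup.subset_closure ⟨W, g ≫ f, c, hc, ?_⟩
    rw [G.map_comp]; rfl
  | zero => simpa using (AddSubgroup.zero_mem _)
  | add a b _ _ ha hb => rw [map_add]; exact AddSubgroup.add_mem _ ha hb
  | neg a _ ha => rw [map_neg]; exact AddSubgroup.neg_mem _ ha

/-- any natural transformation to a polynomial functor kills `genSub` -/
lemma genSub_le_ker (n : ℕ) {G H : C ⥤ AddCommGrpCat.{w}} (hH : PolyLe n H)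
    (s : G ⟶ H) (Y : C) {x : G.obj Y} (hx : x ∈ genSub n G Y) :
    s.app Y x = 0 := by
  have : genSub n G Y ≤ AddMonoidHom.ker (s.app Y).hom := by
    rw [genSub, AddSubgroup.closure_le]
    rintro y ⟨W, f, c, hc, rfl⟩
    rw [SetLike.mem_coe, AddMonoidHom.mem_ker]
    have h1 : s.app (∐ W) c ∈ crSub H W := crSub_map s W hc
    rw [hH W, AddSubgroup.mem_bot] at h1
    calc s.app Y (G.map f c) = H.map f (s.app (∐ W) c) := napp s f c
      _ = H.map f 0 := by rw [h1]
      _ = 0 := (H.map f).hom.map_zero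
  exact this hx

set_option linter.unusedSectionVars false

section IncExc

variable {n : ℕ} (X : Fin (n+1) → C)

/-- the "partial projection" onto the summands in `S` -/
noncomputable def pS (S : Finset (Fin (n+1))) : (∐ X) ⟶ (∐ X) :=
  Sigma.desc (fun i => if i ∈ S then Sigma.ι X i else 0)

lemma pS_univ : pS X Finset.univ = 𝟙 (∐ X) := by
  apply Sigma.hom_ext
  intro i
  simp [pS]

lemma pS_comp_rhat (S : Finset (Fin (n+1))) (k : Fin (n+1)) :
    pS X S ≫ rhat X k = pS X (S.erase k) ≫ rhat X k := by
  apply Sigma.hom_ext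
  intro i
  by_cases hik : i = k
  · subst hik
    by_cases hiS : i ∈ S <;>
      simp [pS, rhat, hiS, Finset.mem_erase]
  · by_cases hiS : i ∈ S <;>
      simp [pS, rhat, hiS, hik, Finset.mem_erase]

lemma pS_factor (S : Finset (Fin (n+1))) (k : Fin (n+1)) (hk : k ∉ S) :
    pS X S = rhat X k ≫ Sigma.desc (fun i : {i : Fin (n+1) // i ≠ k} =>
      if i.1 ∈ S then Sigma.ι X i.1 else 0) := by
  apply Sigma.hom_ext
  intro i
  by_cases hik : i = k
  · subst hik
    have : i ∉ S := hk
    simp [pS, rhat, this]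
  · by_cases hiS : i ∈ S <;> simp [pS, rhat, hik, hiS]

/-- the inclusion–exclusion lemma: an element whose images under all the
retractions lie in `genSub` lies itself in `genSub`. -/
lemma mem_genSub_of_rhat (n : ℕ) (G : C ⥤ AddCommGrpCat.{w}) (X : Fin (n+1) → C) (x : G.obj (∐ X))
    (hx : ∀ k, G.map (rhat X k) x ∈ genSub n G (∐ (fun i : {i : Fin (n+1) // i ≠ k} => X i.1))) :
    x ∈ genSub n G (∐ X) := by
  classical
  set q : G.obj (∐ X) :=
    ∑ S ∈ (Finset.univ : Finset (Fin (n+1))).powerset,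
      ((-1 : ℤ) ^ ((n+1) - S.card)) • (G.map (pS X S) x) with hqdef
  -- claim 1 : q lies in the cross-effect
  have hq_cr : q ∈ crSub G X := by
    rw [crSub, AddSubgroup.mem_iInf]
    intro k
    rw [AddMonoidHom.mem_ker, hqdef, hom_map_sum (G.map (rhat X k))]
    have hterm : ∀ S : Finset (Fin (n+1)),
        G.map (rhat X k) (((-1 : ℤ) ^ ((n+1) - S.card)) • (G.map (pS X S) x))
          = ((-1 : ℤ) ^ ((n+1) - S.card)) •
              G.map (pS X (S.erase k) ≫ rhat X k) x := by
      intro S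
      rw [map_zsmul]
      congr 1
      rw [← pS_comp_rhat, G.map_comp]
      rfl
    rw [Finset.sum_congr rfl (fun S _ => hterm S)]
    have hins : (Finset.univ : Finset (Fin (n+1))) =
        insert k (Finset.univ.erase k) := (Finset.insert_erase (Finset.mem_univ k)).symm
    rw [hins, Finset.sum_powerset_insert (Finset.notMem_erase k _)]
    rw [← Finset.sum_add_distrib]
    apply Finset.sum_eq_zero
    intro t ht
    rw [Finset.mem_powerset] at ht
    have hkt : k ∉ t := fun h => (Finset.notMem_erase k _) (ht h)
    have h1 : (insert k t).erase k = t := Finset.erase_insert hkt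
    have h2 : t.erase k = t := Finset.erase_eq_of_notMem hkt
    have h3 : (insert k t).card = t.card + 1 := Finset.card_insert_of_notMem hkt
    rw [h1, h2, h3]
    have hlt : t.card < n+1 := by
      have := Finset.card_le_card ht
      have hcard : (Finset.univ.erase k).card = n := by
        rw [Finset.card_erase_of_mem (Finset.mem_univ k)]
        simp
      omega
    have hexp : (n+1) - (t.card + 1) + 1 = (n+1) - t.card := by omega
    rw [← add_zsmul]
    have hco : ((-1 : ℤ) ^ ((n+1) - t.card) + (-1 : ℤ) ^ ((n+1) - (t.card + 1))) = 0 := by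
      rw [← hexp, pow_succ]
      ring
    rw [hco, zero_zsmul]
  -- q ∈ genSub
  have hq_mem : q ∈ genSub n G (∐ X) := by
    refine AddSubgroup.subset_closure ⟨X, 𝟙 _, q, hq_cr, ?_⟩
    rw [G.map_id]; rfl
  -- claim 2 : x = q - (sum over proper subsets)
  have hsplit : q = x + ∑ S ∈ ((Finset.univ : Finset (Fin (n+1))).powerset.erase Finset.univ),
      ((-1 : ℤ) ^ ((n+1) - S.card)) • (G.map (pS X S) x) := by
    rw [hqdef, ← Finset.add_sum_erase _ _ (Finset.mem_powerset_self _)]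
    congr 1
    rw [Finset.card_univ]
    simp [pS_univ, G.map_id]
  have hrest : ∑ S ∈ ((Finset.univ : Finset (Fin (n+1))).powerset.erase Finset.univ),
      ((-1 : ℤ) ^ ((n+1) - S.card)) • (G.map (pS X S) x) ∈ genSub n G (∐ X) := by
    apply AddSubgroup.sum_mem
    intro S hS
    apply AddSubgroup.zsmul_mem
    have hSne : S ≠ Finset.univ := (Finset.mem_erase.mp hS).1
    obtain ⟨k, hk⟩ : ∃ k, k ∉ S := by
      by_contra hc; push_neg at hc
      exact hSne (Finset.eq_univ_iff_forall.2 hc)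
    rw [pS_factor X S k hk, G.map_comp]
    exact genSub_map n G _ (hx k)
  have hx_eq : x = q - ∑ S ∈ ((Finset.univ : Finset (Fin (n+1))).powerset.erase Finset.univ),
      ((-1 : ℤ) ^ ((n+1) - S.card)) • (G.map (pS X S) x) := by
    rw [hsplit]; abel
  rw [hx_eq]
  exact AddSubgroup.sub_mem _ hq_mem hrest

end IncExc

----------------------------------------------------------------------
-- the quotient functor `G / genSub`
----------------------------------------------------------------------

section Quot

variable (n : ℕ) (G : C ⥤ AddCommGrpCat.{w})

/-- the quotient functor `Y ↦ G Y / genSub n G Y` -/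
noncomputable def Qf : C ⥤ AddCommGrpCat.{w} where
  obj Y := AddCommGrpCat.of ((G.obj Y : Type w) ⧸ genSub n G Y)
  map {Y Z} f := AddCommGrpCat.ofHom (QuotientAddGroup.map _ _ (G.map f).hom
    (fun x hx => by
      rw [AddSubgroup.mem_comap]
      exact genSub_map n G f hx))
  map_id Y := by
    ext z
    show ((G.map (𝟙 Y) z : G.obj Y) : (G.obj Y : Type w) ⧸ genSub n G Y)
      = ((z : G.obj Y) : (G.obj Y : Type w) ⧸ genSub n G Y)
    rw [G.map_id]
    rfl
  map_comp {Y Z W} f g := by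
    ext z
    show ((G.map (f ≫ g) z : G.obj W) : (G.obj W : Type w) ⧸ genSub n G W)
      = ((G.map g (G.map f z) : G.obj W) : (G.obj W : Type w) ⧸ genSub n G W)
    rw [G.map_comp]
    rfl

/-- the canonical projection onto the quotient functor -/
noncomputable def piQ : G ⟶ Qf n G where
  app Y := AddCommGrpCat.ofHom (QuotientAddGroup.mk' (genSub n G Y))
  naturality Y Z f := by
    ext x
    rfl

lemma Qf_poly : PolyLe n (Qf n G) := by
  intro X
  rw [eq_bot_iff]
  intro c hc
  rw [crSub, AddSubgroup.mem_iInf] at hc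
  refine QuotientAddGroup.induction_on c ?_ hc
  intro z hz
  apply (AddSubgroup.mem_bot).2
  have hz' : ∀ k, G.map (rhat X k) z ∈ genSub n G _ := by
    intro k
    have := hz k
    replace this := AddMonoidHom.mem_ker.mp this
    have h2 : ((Qf n G).map (rhat X k)) ((z : (G.obj (∐ X) : Type w) ⧸ genSub n G (∐ X)))
        = ((G.map (rhat X k) z : G.obj _) : (G.obj _ : Type w) ⧸ genSub n G _) := rfl
    rw [h2] at this
    exact (QuotientAddGroup.eq_zero_iff _).mp this
  have := mem_genSub_of_rhat n G X z hz'
  show ((z : G.obj (∐ X)) : (G.obj (∐ X) : Type w) ⧸ genSub n G (∐ X)) = 0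
  rwa [QuotientAddGroup.eq_zero_iff]

/-- the kernel of a Taylorization unit is contained in `genSub` -/
lemma ker_unit_le_genSub {TG : C ⥤ AddCommGrpCat.{w}} {tG : G ⟶ TG}
    (hTG : IsTaylorization n G TG tG) (Y : C) (x : G.obj Y)
    (hx : tG.app Y x = 0) : x ∈ genSub n G Y := by
  obtain ⟨wq, hwq, -⟩ := hTG.2 (Qf n G) (Qf_poly n G) (piQ n G)
  have h1 : (piQ n G).app Y x = wq.app Y (tG.app Y x) := by
    rw [← hwq]; rfl
  rw [hx, map_zero] at h1
  have h2 : ((x : G.obj Y) : (G.obj Y : Type w) ⧸ genSub n G Y) = 0 := h1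
  rwa [QuotientAddGroup.eq_zero_iff] at h2

end Quot

----------------------------------------------------------------------
-- surjectivity of the Taylorization unit
----------------------------------------------------------------------

section Surj

variable {G TG : C ⥤ AddCommGrpCat.{w}} (tG : G ⟶ TG)

/-- the image subfunctor of a natural transformation -/
noncomputable def Imf : C ⥤ AddCommGrpCat.{w} where
  obj Y := AddCommGrpCat.of ((tG.app Y).hom.range)
  map {Y Z} f := AddCommGrpCat.ofHom <| AddMonoidHom.codRestrict
    (((TG.map f).hom).comp (tG.app Y).hom.range.subtype) _
    (fun z => by
      obtain ⟨x, hx⟩ := z.2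
      have hp : tG.app Z (G.map f x) = TG.map f z.1 := by
        rw [napp tG f x, ← hx]
      exact ⟨G.map f x, hp⟩)
  map_id Y := by
    ext z
    show TG.map (𝟙 Y) z.1 = z.1
    rw [TG.map_id]
    rfl
  map_comp {Y Z W} f g := by
    ext z
    show TG.map (f ≫ g) z.1 = TG.map g (TG.map f z.1)
    rw [TG.map_comp]
    rfl

lemma Imf_poly (hTG : PolyLe n TG) : PolyLe n (Imf tG) := by
  intro X
  rw [eq_bot_iff]
  intro c hc
  rw [crSub, AddSubgroup.mem_iInf] at hc
  rw [AddSubgroup.mem_bot]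
  apply Subtype.ext
  have h1 : c.1 ∈ crSub TG X := by
    rw [crSub, AddSubgroup.mem_iInf]
    intro k
    rw [AddMonoidHom.mem_ker]
    have := hc k
    rw [AddMonoidHom.mem_ker] at this
    have h2 : TG.map (rhat X k) c.1 = ((Imf tG).map (rhat X k) c).1 := rfl
    rw [h2, this]
    rfl
  rw [hTG X, AddSubgroup.mem_bot] at h1
  exact h1

/-- the corestriction of `tG` to its image -/
noncomputable def tG' : G ⟶ Imf tG where
  app Y := AddCommGrpCat.ofHom (AddMonoidHom.codRestrict (tG.app Y).hom _ (fun x => ⟨x, rfl⟩))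
  naturality Y Z f := by
    ext x
    apply Subtype.ext
    show tG.app Z (G.map f x) = TG.map f (tG.app Y x)
    exact napp tG f x

/-- the inclusion of the image -/
noncomputable def incl : Imf tG ⟶ TG where
  app Y := AddCommGrpCat.ofHom (tG.app Y).hom.range.subtype
  naturality Y Z f := rfl

lemma taylor_unit_surjective {n : ℕ} (hTG : IsTaylorization n G TG tG) (Y : C) :
    Function.Surjective (tG.app Y) := by
  obtain ⟨w, hw, -⟩ := hTG.2 (Imf tG) (Imf_poly tG hTG.1) (tG' tG)
  obtain ⟨w0, hw0, huniq⟩ := hTG.2 TG hTG.1 tG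
  have hti : tG' tG ≫ incl tG = tG := by
    ext Y x
    rfl
  have h1 : w ≫ incl tG = w0 := huniq _ (by
    show tG ≫ w ≫ incl tG = tG
    rw [← Category.assoc, hw, hti])
  have h2 : 𝟙 TG = w0 := huniq _ (Category.comp_id tG)
  have h3 : w ≫ incl tG = 𝟙 TG := h1.trans h2.symm
  intro y
  have h4 : ((w ≫ incl tG).app Y) y = y := by rw [h3]; rfl
  have h5 : (w.app Y y).1 = y := h4
  obtain ⟨x, hx⟩ := (w.app Y y).2
  exact ⟨x, hx.trans h5⟩

end Surj

----------------------------------------------------------------------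
-- reduced functors and transfer of the kernel
----------------------------------------------------------------------

section Transfer

open ZeroObject

universe u₂ v₂

variable {D : Type u₂} [Category.{v₂} D] [HasZeroMorphisms D] [HasFiniteCoproducts D]

lemma F_map_zero [HasZeroObject C] (F : C ⥤ D) (hF : IsZero (F.obj 0)) (A B : C) :
    F.map (0 : A ⟶ B) = 0 := by
  have h0 : (0 : A ⟶ B) = (0 : A ⟶ (0 : C)) ≫ (0 : (0 : C) ⟶ B) := zero_comp.symm
  rw [h0, F.map_comp]
  have h1 : F.map (0 : (0 : C) ⟶ B) = 0 := hF.eq_of_src _ _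
  rw [h1, comp_zero]

/-- elements of the Taylor-kernel generating subgroup of `G` at an object of the
form `F X` are killed by any natural transformation from `G ∘ F` to a polynomial
functor. -/
lemma genSub_killed (n : ℕ) [HasZeroObject C] (F : C ⥤ D) (hF : IsZero (F.obj (0 : C)))
    (G : D ⥤ AddCommGrpCat.{w}) {T₁ : C ⥤ AddCommGrpCat.{w}} (hpoly : PolyLe n T₁)
    (t₁ : F ⋙ G ⟶ T₁) (X : C) {x : G.obj (F.obj X)} (hx : x ∈ genSub n G (F.obj X)) :
    t₁.app X x = 0 := by
  classical
  have hle : genSub n G (F.obj X) ≤ AddMonoidHom.ker (t₁.app X).hom := by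
    rw [genSub, AddSubgroup.closure_le]
    rintro y ⟨W, f, c, hc, rfl⟩
    rw [SetLike.mem_coe, AddMonoidHom.mem_ker]
    set X' : Fin (n+1) → C := fun _ => X with hX'
    set FX : Fin (n+1) → D := fun _ => F.obj X with hFX
    set fi : ∀ i, W i ⟶ F.obj X := fun i => Sigma.ι W i ≫ f with hfi
    set h : (∐ W) ⟶ ∐ FX := Sigma.desc (fun i => fi i ≫ Sigma.ι FX i) with hh
    set φ : (∐ FX) ⟶ F.obj (∐ X') := Sigma.desc (fun i => F.map (Sigma.ι X' i)) with hφ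
    set dl : (∐ X') ⟶ X := Sigma.desc (fun _ => 𝟙 X) with hdl
    have hcmem : ∀ k, G.map (rhat W k) c = 0 := by
      intro k
      have := (AddSubgroup.mem_iInf.mp hc) k
      rwa [AddMonoidHom.mem_ker] at this
    -- c₁ is a cross-effect element at the constant family FX
    have hcr1 : G.map h c ∈ crSub G FX := by
      rw [crSub, AddSubgroup.mem_iInf]
      intro k
      rw [AddMonoidHom.mem_ker]
      have key : h ≫ rhat FX k = rhat W k ≫ Sigma.desc
          (fun i : {i : Fin (n+1) // i ≠ k} =>
            fi i.1 ≫ Sigma.ι (fun j : {j : Fin (n+1) // j ≠ k} => FX j.1) i) := by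
        apply Sigma.hom_ext
        intro i
        by_cases hik : i = k
        · subst hik
          simp [hh, rhat]
        · simp [hh, rhat, hik]
      calc G.map (rhat FX k) (G.map h c)
          = G.map (h ≫ rhat FX k) c := (map_comp_apply G h _ c).symm
        _ = G.map (rhat W k ≫ _) c := by rw [key]
        _ = G.map _ (G.map (rhat W k) c) := map_comp_apply G _ _ c
        _ = 0 := by rw [hcmem k, AddMonoidHom.map_zero]
    -- c₂ is a cross-effect element of F ⋙ G at the constant family X'
    have hcr2 : G.map φ (G.map h c) ∈ crSub (F ⋙ G) X' := by
      rw [crSub, AddSubgroup.mem_iInf]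
      intro k
      rw [AddMonoidHom.mem_ker]
      set φ' : (∐ fun i : {i : Fin (n+1) // i ≠ k} => FX i.1) ⟶
          F.obj (∐ fun j : {j : Fin (n+1) // j ≠ k} => X' j.1) :=
        Sigma.desc (fun i : {i : Fin (n+1) // i ≠ k} =>
          F.map (Sigma.ι (fun j : {j : Fin (n+1) // j ≠ k} => X' j.1) i)) with hφ'
      have key2 : φ ≫ F.map (rhat X' k) = rhat FX k ≫ φ' := by
        apply Sigma.hom_ext
        intro i
        by_cases hik : i = k
        · subst hik
          have e1 : Sigma.ι X' i ≫ rhat X' i = 0 := by simp [rhat]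
          have e2 : Sigma.ι FX i ≫ φ ≫ F.map (rhat X' i) = 0 := by
            rw [← Category.assoc]
            simp only [hφ, Sigma.ι_desc]
            rw [← F.map_comp, e1, F_map_zero F hF]
          have e3 : Sigma.ι FX i ≫ rhat FX i ≫ φ' = 0 := by
            rw [← Category.assoc]
            simp [rhat]
          rw [e2, e3]
        · have e2 : Sigma.ι FX i ≫ φ ≫ F.map (rhat X' k)
              = F.map (Sigma.ι X' i ≫ rhat X' k) := by
            rw [← Category.assoc]
            simp only [hφ, Sigma.ι_desc]
            rw [← F.map_comp]
          rw [e2]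
          simp [rhat, hik, hφ']
      have hstep : (F ⋙ G).map (rhat X' k) (G.map φ (G.map h c))
          = G.map (φ ≫ F.map (rhat X' k)) (G.map h c) :=
        (map_comp_apply G φ (F.map (rhat X' k)) (G.map h c)).symm
      calc (F ⋙ G).map (rhat X' k) (G.map φ (G.map h c))
          = G.map (φ ≫ F.map (rhat X' k)) (G.map h c) := hstep
        _ = G.map (rhat FX k ≫ φ') (G.map h c) := by rw [key2]
        _ = G.map φ' (G.map (rhat FX k) (G.map h c)) := map_comp_apply G _ _ _
        _ = 0 := by
            have hz : G.map (rhat FX k) (G.map h c) = 0 := by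
              have := (AddSubgroup.mem_iInf.mp hcr1) k
              rwa [AddMonoidHom.mem_ker] at this
            rw [hz, AddMonoidHom.map_zero]
    -- f factors as h ≫ φ ≫ F.map dl
    have hf : f = h ≫ φ ≫ F.map dl := by
      apply Sigma.hom_ext
      intro i
      have e : Sigma.ι X' i ≫ dl = 𝟙 X := by simp [hdl]
      have ecalc : Sigma.ι W i ≫ h ≫ φ ≫ F.map dl = Sigma.ι W i ≫ f := by
        calc Sigma.ι W i ≫ h ≫ φ ≫ F.map dl
            = fi i ≫ Sigma.ι FX i ≫ φ ≫ F.map dl := by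
              rw [← Category.assoc, ← Category.assoc, ← Category.assoc]
              simp [hh]
          _ = fi i ≫ F.map (Sigma.ι X' i) ≫ F.map dl := by
              rw [← Category.assoc, ← Category.assoc]
              simp [hφ]
          _ = fi i ≫ F.map (Sigma.ι X' i ≫ dl) := by rw [F.map_comp]
          _ = fi i := by rw [e, F.map_id, Category.comp_id]
          _ = Sigma.ι W i ≫ f := rfl
      exact ecalc.symm
    -- conclusion
    have hx2 : G.map f c = G.map (F.map dl) (G.map φ (G.map h c)) := by
      calc G.map f c = G.map (h ≫ φ ≫ F.map dl) c := by rw [← hf]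
        _ = G.map (φ ≫ F.map dl) (G.map h c) := map_comp_apply G _ _ c
        _ = G.map (F.map dl) (G.map φ (G.map h c)) := map_comp_apply G _ _ _
    have hfin : t₁.app X (G.map (F.map dl) (G.map φ (G.map h c)))
        = T₁.map dl (t₁.app (∐ X') (G.map φ (G.map h c))) :=
      napp t₁ dl (G.map φ (G.map h c))
    have hz2 : t₁.app (∐ X') (G.map φ (G.map h c)) = 0 := by
      have := crSub_map t₁ X' hcr2
      rwa [hpoly X', AddSubgroup.mem_bot] at this
    rw [hx2]
    exact hfin.trans (by rw [hz2, AddMonoidHom.map_zero])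
  exact hle hx

end Transfer

----------------------------------------------------------------------
-- lifting along a surjection with kernel condition
----------------------------------------------------------------------

section Lift

lemma lift_congr {A B E : AddCommGrpCat.{w}} (p : A ⟶ B) (t : A ⟶ E)
    (hk : ∀ x, p x = 0 → t x = 0) {x y : (A : Type w)} (hxy : p x = p y) :
    t x = t y := by
  have h1 : p (x - y) = 0 := by rw [map_sub, hxy, sub_self]
  have h2 := hk (x - y) h1
  rw [map_sub] at h2
  exact sub_eq_zero.mp h2

noncomputable def liftAlong {A B E : AddCommGrpCat.{w}} (p : A ⟶ B) (t : A ⟶ E)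
    (hs : Function.Surjective p) (hk : ∀ x, p x = 0 → t x = 0) : B ⟶ E :=
  AddCommGrpCat.ofHom <| AddMonoidHom.mk' (fun y => t (Function.surjInv hs y)) (by
    intro a b
    have e : t (Function.surjInv hs a) + t (Function.surjInv hs b)
        = t (Function.surjInv hs a + Function.surjInv hs b) := (map_add t.hom _ _).symm
    rw [e]
    apply lift_congr p t hk
    rw [map_add, Function.surjInv_eq hs, Function.surjInv_eq hs, Function.surjInv_eq hs])

lemma liftAlong_spec {A B E : AddCommGrpCat.{w}} (p : A ⟶ B) (t : A ⟶ E)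
    (hs : Function.Surjective p) (hk : ∀ x, p x = 0 → t x = 0) (x : (A : Type w)) :
    liftAlong p t hs hk (p x) = t x := by
  show t (Function.surjInv hs (p x)) = t x
  apply lift_congr p t hk
  rw [Function.surjInv_eq hs]

end Lift

open ZeroObject in
/-- Let `C`, `D` be pointed categories with finite sums, `E`
an abelian category (here `Ab`), and `F : C ⥤ D`, `G : D ⥤ E` functors with `F`
reduced.  Then the natural map `T_n(F^* t_n^G) : T_n(G ∘ F) ⟶ T_n(T_n G ∘ F)`
induced by the canonical epimorphism `t_n^G : G ⟶ T_n G` is an isomorphism.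
(The Taylorizations are characterized by their universal property; the induced
map is the unique `u` with `t₁ ≫ u = (F ▹ t_G) ≫ t₂`.) -/
theorem taylor_comp_taylor_iso
    {D : Type u'} [Category.{v'} D] [HasZeroMorphisms D] [HasFiniteCoproducts D]
    [HasZeroObject C] [HasZeroObject D]
    (n : ℕ) (F : C ⥤ D) (hF : IsZero (F.obj 0))
    (G : D ⥤ AddCommGrpCat.{w})
    (TG : D ⥤ AddCommGrpCat.{w}) (tG : G ⟶ TG)
    (hTG : IsTaylorization n G TG tG)
    (T₁ : C ⥤ AddCommGrpCat.{w}) (t₁ : F ⋙ G ⟶ T₁)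
    (hT₁ : IsTaylorization n (F ⋙ G) T₁ t₁)
    (T₂ : C ⥤ AddCommGrpCat.{w}) (t₂ : F ⋙ TG ⟶ T₂)
    (hT₂ : IsTaylorization n (F ⋙ TG) T₂ t₂)
    (u : T₁ ⟶ T₂) (hu : t₁ ≫ u = CategoryTheory.Functor.whiskerLeft F tG ≫ t₂) :
    IsIso u := by
  have hsurj : ∀ Y : D, Function.Surjective (tG.app Y) :=
    taylor_unit_surjective tG hTG
  have hker : ∀ (X : C) (x : G.obj (F.obj X)), tG.app (F.obj X) x = 0 →
      t₁.app X x = 0 := by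
    intro X x hx
    exact genSub_killed n F hF G hT₁.1 t₁ X
      (ker_unit_le_genSub n G hTG (F.obj X) x hx)
  -- the induced transformation s : F ⋙ TG ⟶ T₁
  have hnat : ∀ (X X' : C) (f : X ⟶ X'),
      (F ⋙ TG).map f ≫ liftAlong (tG.app (F.obj X')) (t₁.app X')
          (hsurj (F.obj X')) (hker X')
        = liftAlong (tG.app (F.obj X)) (t₁.app X)
          (hsurj (F.obj X)) (hker X) ≫ T₁.map f := by
    intro X X' f
    ext y
    obtain ⟨x, rfl⟩ := hsurj (F.obj X) y
    calc ((F ⋙ TG).map f ≫ liftAlong (tG.app (F.obj X')) (t₁.app X')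
            (hsurj (F.obj X')) (hker X')) (tG.app (F.obj X) x)
        = liftAlong (tG.app (F.obj X')) (t₁.app X') (hsurj (F.obj X')) (hker X')
            (tG.app (F.obj X') (G.map (F.map f) x)) := by
          show liftAlong (tG.app (F.obj X')) (t₁.app X') (hsurj (F.obj X')) (hker X')
              ((F ⋙ TG).map f (tG.app (F.obj X) x)) = _
          rw [show (F ⋙ TG).map f (tG.app (F.obj X) x)
              = tG.app (F.obj X') (G.map (F.map f) x) from (napp tG (F.map f) x).symm]
      _ = t₁.app X' (G.map (F.map f) x) := liftAlong_spec _ _ _ _ _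
      _ = T₁.map f (t₁.app X x) := napp t₁ f x
      _ = T₁.map f (liftAlong (tG.app (F.obj X)) (t₁.app X)
            (hsurj (F.obj X)) (hker X) (tG.app (F.obj X) x)) :=
          congrArg (T₁.map f) (liftAlong_spec _ _ _ _ x).symm
      _ = (liftAlong (tG.app (F.obj X)) (t₁.app X)
            (hsurj (F.obj X)) (hker X) ≫ T₁.map f) (tG.app (F.obj X) x) := rfl
  let s : F ⋙ TG ⟶ T₁ :=
    { app := fun X => liftAlong (tG.app (F.obj X)) (t₁.app X)
        (hsurj (F.obj X)) (hker X)
      naturality := fun {X X'} f => hnat X X' f }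
  have hcomp : CategoryTheory.Functor.whiskerLeft F tG ≫ s = t₁ := by
    ext X x
    exact liftAlong_spec (tG.app (F.obj X)) (t₁.app X) (hsurj (F.obj X)) (hker X) x
  obtain ⟨v, hv, -⟩ := hT₂.2 T₁ hT₁.1 s
  obtain ⟨w1, hw1, huniq1⟩ := hT₁.2 T₁ hT₁.1 t₁
  have hidl : u ≫ v = 𝟙 T₁ := by
    have ha : t₁ ≫ (u ≫ v) = t₁ := by
      rw [← Category.assoc, hu, Category.assoc, hv, hcomp]
    rw [huniq1 _ ha, huniq1 _ (Category.comp_id t₁)]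
  have hsu : s ≫ u = t₂ := by
    ext X y
    obtain ⟨x, rfl⟩ := hsurj (F.obj X) y
    have e1 : s.app X (tG.app (F.obj X) x) = t₁.app X x :=
      liftAlong_spec (tG.app (F.obj X)) (t₁.app X) (hsurj (F.obj X)) (hker X) x
    have e2 : (t₁ ≫ u).app X x = ((CategoryTheory.Functor.whiskerLeft F tG) ≫ t₂).app X x := by
      rw [hu]
    show u.app X (s.app X (tG.app (F.obj X) x)) = t₂.app X (tG.app (F.obj X) x)
    rw [e1]
    exact e2
  obtain ⟨w2, hw2, huniq2⟩ := hT₂.2 T₂ hT₂.1 t₂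
  have hidr : v ≫ u = 𝟙 T₂ := by
    have ha : t₂ ≫ (v ≫ u) = t₂ := by
      rw [← Category.assoc, hv, hsu]
    rw [huniq2 _ ha, huniq2 _ (Category.comp_id t₂)]
  exact ⟨⟨v, hidl, hidr⟩⟩
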